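/- For the Moyal star product with parameter ħ on polynomials in (q,p), one has (qp) ⋆ (qp)^j = (qp)^{j+1} + ħ² (j²/4) (qp)^{j−1} for all j ≥ 1. -/

import Mathlib

open MvPolynomial

/-- `k`-fold partial derivative in variable `i` of a polynomial symbol in `(q,p)`. -/
noncomputable def pdIter (i : Fin 2) (k : ℕ) (A : MvPolynomial (Fin 2) ℂ) :
    MvPolynomial (Fin 2) ℂ :=
  (fun B => MvPolynomial.pderiv i B)^[k] A

/-- The bidifferential operator `A 𝒟ⁿ B`, where
`𝒟 = ∂_p ⊗ ∂_q − ∂_q ⊗ ∂_p` (variable `0` is `q`, variable `1` is `p`). -/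
noncomputable def moyalD (n : ℕ) (A B : MvPolynomial (Fin 2) ℂ) :
    MvPolynomial (Fin 2) ℂ :=
  ∑ k ∈ Finset.range (n + 1),
    ((-1 : ℂ) ^ k * (n.choose k : ℂ)) •
      (pdIter 0 k (pdIter 1 (n - k) A) * pdIter 1 k (pdIter 0 (n - k) B))

/-- The Moyal star product `A ⋆ B = ∑ₙ (ihbar)ⁿ/(2ⁿ n!) (A𝒟ⁿB)`; for polynomials the sum
terminates since `A𝒟ⁿB = 0` for `n > totalDegree A`. -/
noncomputable def moyal (hbar : ℝ) (A B : MvPolynomial (Fin 2) ℂ) :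
    MvPolynomial (Fin 2) ℂ :=
  ∑ n ∈ Finset.range (A.totalDegree + 1),
    ((Complex.I * (hbar : ℂ)) ^ n / ((2 : ℂ) ^ n * (n.factorial : ℂ))) • moyalD n A B

/-- `(qp) ⋆ (qp)^j = (qp)^{j+1} + hbar²(j²/4)(qp)^{j−1}` for `j ≥ 1`. -/
lemma pdIter_zero (i : Fin 2) (A : MvPolynomial (Fin 2) ℂ) : pdIter i 0 A = A := rfl
lemma pdIter_one (i : Fin 2) (A : MvPolynomial (Fin 2) ℂ) : pdIter i 1 A = pderiv i A := rfl
lemma pdIter_two (i : Fin 2) (A : MvPolynomial (Fin 2) ℂ) :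
    pdIter i 2 A = pderiv i (pderiv i A) := rfl

lemma pd0_pow (m : ℕ) :
    pderiv 0 ((X 0 * X 1 : MvPolynomial (Fin 2) ℂ)^m)
      = (m : MvPolynomial (Fin 2) ℂ) * ((X 0 * X 1)^(m-1) * X 1) := by
  rw [Derivation.leibniz_pow]; simp [smul_eq_mul, nsmul_eq_mul, pderiv_X]

lemma pd1_pow (m : ℕ) :
    pderiv 1 ((X 0 * X 1 : MvPolynomial (Fin 2) ℂ)^m)
      = (m : MvPolynomial (Fin 2) ℂ) * ((X 0 * X 1)^(m-1) * X 0) := by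
  rw [Derivation.leibniz_pow]; simp [smul_eq_mul, nsmul_eq_mul, pderiv_X]

theorem moyal_qp_pow (hbar : ℝ) (j : ℕ) (hj : 1 ≤ j) :
    moyal hbar (X 0 * X 1) ((X 0 * X 1 : MvPolynomial (Fin 2) ℂ) ^ j)
      = (X 0 * X 1) ^ (j + 1)
        + MvPolynomial.C ((hbar : ℂ) ^ 2 * (j : ℂ) ^ 2 / 4) * (X 0 * X 1) ^ (j - 1) := by
  obtain ⟨m, rfl⟩ := Nat.exists_eq_add_of_le hj
  have hdeg : (X 0 * X 1 : MvPolynomial (Fin 2) ℂ).totalDegree = 2 := by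
    rw [show (X 0 * X 1 : MvPolynomial (Fin 2) ℂ)
        = monomial (Finsupp.single 0 1 + Finsupp.single 1 1) 1 by
      rw [monomial_add_single]; simp [X]]
    rw [totalDegree_monomial _ one_ne_zero]
    rw [Finsupp.sum_add_index' (fun _ => rfl) (fun _ _ _ => rfl)]
    simp [Finsupp.sum_single_index]
  unfold moyal moyalD
  rw [hdeg]
  simp only [Finset.sum_range_succ, Finset.sum_range_zero]
  norm_num [pdIter_zero, pdIter_one, pdIter_two, pd0_pow, pd1_pow, pderiv_X, smul_eq_mul]
  have hm : ∀ (n:ℕ), (X 1 * ((n: MvPolynomial (Fin 2) ℂ) * ((X 0 * X 1)^(n-1) * X 0)))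
      = (n:MvPolynomial (Fin 2) ℂ) * (X 0 * X 1)^n := by
    intro n
    cases n with
    | zero => simp
    | succ k => push_cast [pow_succ]; ring
  rw [hm m]
  simp only [smul_eq_C_mul, nsmul_eq_mul,
    ← map_natCast (C : ℂ →+* MvPolynomial (Fin 2) ℂ),
    ← map_ofNat (C : ℂ →+* MvPolynomial (Fin 2) ℂ), ← map_one (C : ℂ →+* MvPolynomial (Fin 2) ℂ),
    ← map_add (C : ℂ →+* MvPolynomial (Fin 2) ℂ), ← map_mul (C : ℂ →+* MvPolynomial (Fin 2) ℂ)]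
  simp only [map_add, map_one]
  have hI : (Complex.I*(hbar:ℂ))^2 = -(hbar:ℂ)^2 := by
    rw [mul_pow, Complex.I_sq]; ring
  have key : (MvPolynomial.C ((hbar:ℂ)^2*(1+(m:ℂ))^2/4) : MvPolynomial (Fin 2) ℂ)
      = -(MvPolynomial.C ((Complex.I*(hbar:ℂ))^2/8)
          * (MvPolynomial.C 2 * ((1 + MvPolynomial.C (m:ℂ)) * (1 + MvPolynomial.C (m:ℂ))))) := by
    rw [show ((hbar:ℂ)^2*(1+(m:ℂ))^2/4)
        = -(((Complex.I*(hbar:ℂ))^2/8) * (2*((1+(m:ℂ))*(1+(m:ℂ))))) by rw [hI]; ring]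
    simp only [map_neg, map_mul, map_add, map_one]
  rw [key]
  ring
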